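/- Let n ∈ {2,3} and let T ∈ M_n(ℤ) have characteristic polynomial irreducible over ℤ. Assume that for every j with 1 ≤ j ≤ n, the matrix T^j is not conjugate (over ℝ) to a similarity matrix. Then for every eigenvalue λ ∈ ℂ of T and every integer m ≥ 1, the real number |λ|^m is irrational. -/

import Mathlib

open Filter MeasureTheory Metric Set Matrix
open scoped Topology ENNReal NNReal

noncomputable section

namespace FracPert

/-- View a plain vector as a point of Euclidean space. -/
def euc {n : ℕ} (v : Fin n → ℝ) : EuclideanSpace ℝ (Fin n) := WithLp.toLp 2 v

/-- The real matrix associated with an integer matrix. -/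
def intMat {n : ℕ} (T : Matrix (Fin n) (Fin n) ℤ) : Matrix (Fin n) (Fin n) ℝ :=
  T.map fun x => (x : ℝ)

/-- An integer vector as a real vector. -/
def zVec {n : ℕ} (v : Fin n → ℤ) : Fin n → ℝ := fun i => (v i : ℝ)

/-- An integer matrix is expanding if all of its complex eigenvalues have modulus `> 1`. -/
def IsExpandingZ {n : ℕ} (T : Matrix (Fin n) (Fin n) ℤ) : Prop :=
  ∀ μ : ℂ, (T.map fun x => (x : ℂ)).charpoly.IsRoot μ → 1 < ‖μ‖

/-- A real matrix is expanding if all of its complex eigenvalues have modulus `> 1`. -/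
def IsExpandingR {n : ℕ} (T : Matrix (Fin n) (Fin n) ℝ) : Prop :=
  ∀ μ : ℂ, (T.map fun x => (x : ℂ)).charpoly.IsRoot μ → 1 < ‖μ‖

/-- `F` is the self-affine set generated by the real matrix `M` and the digit set `A`:
`F` is nonempty, compact, and `F = ⋃_{a ∈ A} M⁻¹ (F + a)`. -/
def IsSelfAffineR {n : ℕ} (M : Matrix (Fin n) (Fin n) ℝ) (A : Set (Fin n → ℝ))
    (F : Set (EuclideanSpace ℝ (Fin n))) : Prop :=
  F.Nonempty ∧ IsCompact F ∧
    F = ⋃ a ∈ A, (fun x : EuclideanSpace ℝ (Fin n) => euc (M⁻¹ *ᵥ (x + euc a))) '' F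

/-- Integral self-affine set. -/
def IsSelfAffineZ {n : ℕ} (T : Matrix (Fin n) (Fin n) ℤ) (A : Set (Fin n → ℤ))
    (F : Set (EuclideanSpace ℝ (Fin n))) : Prop :=
  IsSelfAffineR (intMat T) (zVec '' A) F

/-- The iterated digit sets `A_k = {∑_{i=1}^k T^{k-i} a_i : a_i ∈ A}`. -/
def digitSetIter {n : ℕ} (T : Matrix (Fin n) (Fin n) ℤ) (A : Set (Fin n → ℤ)) (k : ℕ) :
    Set (Fin n → ℤ) :=
  { v | ∃ a : Fin k → Fin n → ℤ, (∀ i, a i ∈ A) ∧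
      v = ∑ i : Fin k, (T ^ (k - 1 - (i : ℕ))) *ᵥ a i }

/-- The iterated digit sets for a real matrix. -/
def digitSetIterR {n : ℕ} (J : Matrix (Fin n) (Fin n) ℝ) (A : Set (Fin n → ℝ)) (k : ℕ) :
    Set (Fin n → ℝ) :=
  { v | ∃ a : Fin k → Fin n → ℝ, (∀ i, a i ∈ A) ∧
      v = ∑ i : Fin k, (J ^ (k - 1 - (i : ℕ))) *ᵥ a i }

/-- The signed floor. -/
def sfloor (t : ℝ) : ℤ := if 0 ≤ t then ⌊t⌋ else -⌊|t|⌋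

/-- The signed ceiling. -/
def sceil (t : ℝ) : ℤ := if 0 ≤ t then ⌈t⌉ else -⌈|t|⌉

/-- Entrywise signed floor of a vector. -/
def sfloorVec {n : ℕ} (v : Fin n → ℝ) : Fin n → ℤ := fun i => sfloor (v i)

/-- The perturbed matrix `T_k`: the entrywise signed ceiling of `J^k`. -/
def pertMat {n : ℕ} (J : Matrix (Fin n) (Fin n) ℝ) (k : ℕ) : Matrix (Fin n) (Fin n) ℤ :=
  Matrix.of fun i j => sceil ((J ^ k) i j)

/-- A real Jordan block for a real eigenvalue: lower triangular, `lam` on the diagonal,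
`1` on the subdiagonal. -/
def realJordanBlock (d : ℕ) (lam : ℝ) : Matrix (Fin d) (Fin d) ℝ :=
  Matrix.of fun i j =>
    if (i : ℕ) = (j : ℕ) then lam else if (i : ℕ) = (j : ℕ) + 1 then 1 else 0

/-- A real Jordan block for a non-real eigenvalue `a + b i`, made of `2 × 2` blocks:
`C = [[a, -b], [b, a]]` on the block diagonal and `I₂` on the block subdiagonal. -/
def complexJordanBlock (m : ℕ) (a b : ℝ) : Matrix (Fin (2 * m)) (Fin (2 * m)) ℝ :=
  Matrix.of fun i j =>
    if (i : ℕ) / 2 = (j : ℕ) / 2 then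
      (if (i : ℕ) % 2 = (j : ℕ) % 2 then a else if (i : ℕ) % 2 = 0 then -b else b)
    else if (i : ℕ) / 2 = (j : ℕ) / 2 + 1 then
      (if (i : ℕ) % 2 = (j : ℕ) % 2 then 1 else 0)
    else 0

/-- `B` is a real Jordan-type block with eigenvalue modulus `ρ` and algebraic multiplicity
`np`. -/
def IsJordanBlock {d : ℕ} (B : Matrix (Fin d) (Fin d) ℝ) (ρ : ℝ) (np : ℕ) : Prop :=
  (d = np ∧ ∃ lam : ℝ, |lam| = ρ ∧ B = realJordanBlock d lam) ∨
  (∃ h : d = 2 * np, ∃ a b : ℝ, b ≠ 0 ∧ Real.sqrt (a ^ 2 + b ^ 2) = ρ ∧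
      B = Matrix.reindex (finCongr h).symm (finCongr h).symm (complexJordanBlock np a b))

/-- The index identification `(Σ p, Fin (d p)) ≃ Fin n` respects the block order
(lexicographic order on the sigma type). -/
def IsJordanArrangement {n s : ℕ} (d : Fin s → ℕ)
    (e : ((p : Fin s) × Fin (d p)) ≃ Fin n) : Prop :=
  ∀ x y : (p : Fin s) × Fin (d p), Sigma.Lex (· < ·) (fun _ => (· < ·)) x y → e x < e y

/-- `J` is a real Jordan-type matrix: a block diagonal matrix with real Jordan-type
blocks whose eigenvalue moduli are `ρ 0 < ρ 1 < ⋯`, all `> 1`. -/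
def IsRealJordanLike {n s : ℕ} (J : Matrix (Fin n) (Fin n) ℝ) (ρ : Fin s → ℝ) : Prop :=
  (∀ p, 1 < ρ p) ∧ StrictMono ρ ∧
  ∃ (d np : Fin s → ℕ) (B : ∀ p, Matrix (Fin (d p)) (Fin (d p)) ℝ)
    (e : ((p : Fin s) × Fin (d p)) ≃ Fin n),
    (∀ p, 0 < np p) ∧ (∀ p, IsJordanBlock (B p) (ρ p) (np p)) ∧
    IsJordanArrangement d e ∧
    J = Matrix.reindex e e (Matrix.blockDiagonal' B)

/-- Perturbation data for an integer matrix `T`: an invertible real matrix `P` such that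
`J = P⁻¹ T P` is a real Jordan-type matrix and distinct points of the lattice `P⁻¹ ℤ^n`
are at distance `> n`. -/
def IsPerturbationData {n s : ℕ} (T : Matrix (Fin n) (Fin n) ℤ)
    (P : Matrix (Fin n) (Fin n) ℝ) (ρ : Fin s → ℝ) : Prop :=
  IsUnit P ∧ IsRealJordanLike (P⁻¹ * intMat T * P) ρ ∧
    ∀ v w : Fin n → ℤ, v ≠ w →
      (n : ℝ) < ‖euc (P⁻¹ *ᵥ zVec v - P⁻¹ *ᵥ zVec w)‖

/-- The digit sets `Ã_k = P⁻¹ A_k`. -/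
def tildeDigits {n : ℕ} (T : Matrix (Fin n) (Fin n) ℤ) (A : Set (Fin n → ℤ))
    (P : Matrix (Fin n) (Fin n) ℝ) (k : ℕ) : Set (Fin n → ℝ) :=
  (fun a => P⁻¹ *ᵥ zVec a) '' digitSetIter T A k

/-- The perturbed digit sets `D_k = ⌊Ã_k⌋±`. -/
def pertDigits {n : ℕ} (T : Matrix (Fin n) (Fin n) ℤ) (A : Set (Fin n → ℤ))
    (P : Matrix (Fin n) (Fin n) ℝ) (k : ℕ) : Set (Fin n → ℤ) :=
  sfloorVec '' tildeDigits T A P k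

/-- `N(S, δ)`: the smallest number of sets of diameter at most `δ` needed to cover `S`. -/
def coverNum {n : ℕ} (S : Set (EuclideanSpace ℝ (Fin n))) (δ : ℝ) : ℕ :=
  sInf { m : ℕ | ∃ C : Fin m → Set (EuclideanSpace ℝ (Fin n)),
    (∀ i, Metric.diam (C i) ≤ δ) ∧ S ⊆ ⋃ i, C i }

/-- The lower box dimension. -/
def lowerBoxDim {n : ℕ} (S : Set (EuclideanSpace ℝ (Fin n))) : ℝ :=
  liminf (fun δ : ℝ => Real.log (coverNum S δ) / Real.log (1 / δ)) (𝓝[>] (0 : ℝ))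

/-- The upper box dimension. -/
def upperBoxDim {n : ℕ} (S : Set (EuclideanSpace ℝ (Fin n))) : ℝ :=
  limsup (fun δ : ℝ => Real.log (coverNum S δ) / Real.log (1 / δ)) (𝓝[>] (0 : ℝ))

/-- The integer lattice `ℤ^n` inside Euclidean space. -/
def intLattice (n : ℕ) : AddSubgroup (EuclideanSpace ℝ (Fin n)) where
  carrier := { v | ∀ i, ∃ m : ℤ, v i = (m : ℝ) }
  zero_mem' := fun i => ⟨0, by simp⟩
  add_mem' := by
    intro a b ha hb i
    obtain ⟨ma, hma⟩ := ha i
    obtain ⟨mb, hmb⟩ := hb i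
    exact ⟨ma + mb, by push_cast; rw [← hma, ← hmb]; rfl⟩
  neg_mem' := by
    intro a ha i
    obtain ⟨ma, hma⟩ := ha i
    exact ⟨-ma, by push_cast; rw [← hma]; rfl⟩

theorem intLattice_isClosed (n : ℕ) :
    IsClosed ((intLattice n : Set (EuclideanSpace ℝ (Fin n)))) := by
  have h : (intLattice n : Set (EuclideanSpace ℝ (Fin n))) =
      ⋂ i, (fun v : EuclideanSpace ℝ (Fin n) => v i) ⁻¹'
        (Set.range (fun m : ℤ => (m : ℝ))) := by
    ext v
    simp only [Set.mem_iInter, Set.mem_preimage, Set.mem_range]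
    constructor
    · intro hv i; obtain ⟨m, hm⟩ := hv i; exact ⟨m, hm.symm⟩
    · intro hv i; obtain ⟨m, hm⟩ := hv i; exact ⟨m, hm.symm⟩
  rw [h]
  exact isClosed_iInter fun i =>
    (Int.isClosedEmbedding_coe_real.isClosed_range).preimage
      (EuclideanSpace.proj (𝕜 := ℝ) i).continuous

/-- The `n`-torus `ℝ^n / ℤ^n` (with the quotient metric). -/
abbrev Torus (n : ℕ) := EuclideanSpace ℝ (Fin n) ⧸ intLattice n

noncomputable instance (n : ℕ) : NormedAddCommGroup (Torus n) :=
  have : IsClosed ((intLattice n : Set (EuclideanSpace ℝ (Fin n)))) := intLattice_isClosed n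
  QuotientAddGroup.instNormedAddCommGroup (S := intLattice n)

instance (n : ℕ) : MeasurableSpace (Torus n) := borel _
instance (n : ℕ) : BorelSpace (Torus n) := ⟨rfl⟩

/-- The quotient map `ℝ^n → 𝕋^n`. -/
def tproj (n : ℕ) : EuclideanSpace ℝ (Fin n) → Torus n := QuotientAddGroup.mk

/-- Multiplication by a matrix as an additive homomorphism of Euclidean space. -/
def mulVecAddHom {n : ℕ} (M : Matrix (Fin n) (Fin n) ℝ) :
    EuclideanSpace ℝ (Fin n) →+ EuclideanSpace ℝ (Fin n) where
  toFun v := euc (M *ᵥ v)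
  map_zero' := by
    show euc (M *ᵥ (0 : Fin n → ℝ)) = 0
    simp [euc]
  map_add' x y := by
    show euc (M *ᵥ ((x : Fin n → ℝ) + (y : Fin n → ℝ))) = _
    rw [Matrix.mulVec_add]
    rfl

theorem intLattice_le_comap {n : ℕ} (T : Matrix (Fin n) (Fin n) ℤ) :
    intLattice n ≤ (intLattice n).comap (mulVecAddHom (intMat T)) := by
  intro v hv
  intro i
  choose m hm using hv
  refine ⟨∑ j, T i j * m j, ?_⟩
  show (intMat T *ᵥ (v : Fin n → ℝ)) i = _
  simp only [intMat, Matrix.mulVec, dotProduct, Matrix.map_apply]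
  push_cast
  refine Finset.sum_congr rfl fun j _ => ?_
  rw [hm j]

/-- The toral endomorphism induced by an integer matrix `T`, determined by
`φ_T (π x) = π (T x)`. -/
def torusMap {n : ℕ} (T : Matrix (Fin n) (Fin n) ℤ) : Torus n → Torus n :=
  QuotientAddGroup.map (intLattice n) (intLattice n) (mulVecAddHom (intMat T))
    (intLattice_le_comap T)

/-- `μ` is invariant under `f`. -/
def MeasInvariant {α : Type*} [MeasurableSpace α] (f : α → α) (μ : Measure α) : Prop :=
  ∀ B : Set α, MeasurableSet B → μ (f ⁻¹' B) = μ B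

/-- `μ` is an ergodic invariant measure for `f`. -/
def MeasErgodic {α : Type*} [MeasurableSpace α] (f : α → α) (μ : Measure α) : Prop :=
  MeasInvariant f μ ∧ ∀ B : Set α, MeasurableSet B → f ⁻¹' B = B → μ B = 0 ∨ μ B = 1

/-- The (Euclidean) operator norm of a real matrix. -/
def opNorm {n : ℕ} (M : Matrix (Fin n) (Fin n) ℝ) : ℝ :=
  sSup { t : ℝ | ∃ v : EuclideanSpace ℝ (Fin n), ‖v‖ ≤ 1 ∧ t = ‖euc (M *ᵥ v)‖ }

/-- The smallest modulus of a complex eigenvalue of an integer matrix. -/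
def minMod {n : ℕ} (M : Matrix (Fin n) (Fin n) ℤ) : ℝ :=
  sInf { r : ℝ | ∃ μ : ℂ, (M.map fun x => (x : ℂ)).charpoly.IsRoot μ ∧ r = ‖μ‖ }

/-- The largest modulus of a complex eigenvalue of an integer matrix. -/
def maxMod {n : ℕ} (M : Matrix (Fin n) (Fin n) ℤ) : ℝ :=
  sSup { r : ℝ | ∃ μ : ℂ, (M.map fun x => (x : ℂ)).charpoly.IsRoot μ ∧ r = ‖μ‖ }

/-- A similarity matrix: a positive multiple of an orthogonal matrix. -/
def IsSimilarityMatrix {n : ℕ} (S : Matrix (Fin n) (Fin n) ℝ) : Prop :=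
  ∃ c : ℝ, 0 < c ∧ ∃ O : Matrix (Fin n) (Fin n) ℝ, Oᵀ * O = 1 ∧ S = c • O


section AuxProof

open Polynomial

-- ### Generalities on characteristic polynomials and eigenvectors

lemma charpoly_eval_eq_det {n : ℕ} {F : Type*} [Field F] (M : Matrix (Fin n) (Fin n) F) (μ : F) :
    M.charpoly.eval μ = (μ • (1 : Matrix (Fin n) (Fin n) F) - M).det := by
  rw [Matrix.charpoly, ← Polynomial.coe_evalRingHom, RingHom.map_det]
  congr 1
  ext i j
  by_cases h : i = j <;>
    simp [Matrix.charmatrix_apply, Matrix.diagonal_apply, Matrix.one_apply, h]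

lemma exists_eigenvector {n : ℕ} {F : Type*} [Field F] (M : Matrix (Fin n) (Fin n) F) (μ : F)
    (h : M.charpoly.IsRoot μ) : ∃ v : Fin n → F, v ≠ 0 ∧ M *ᵥ v = μ • v := by
  have h2 : (μ • (1 : Matrix (Fin n) (Fin n) F) - M).det = 0 := by
    rw [← charpoly_eval_eq_det]; exact h
  have hd : (M - μ • 1).det = 0 := by
    have h3 : M - μ • (1 : Matrix (Fin n) (Fin n) F) = -(μ • 1 - M) := by rw [neg_sub]
    rw [h3, Matrix.det_neg, h2, mul_zero]
  obtain ⟨v, hv0, hv⟩ := Matrix.exists_mulVec_eq_zero_iff.mpr hd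
  refine ⟨v, hv0, ?_⟩
  rw [Matrix.sub_mulVec, sub_eq_zero] at hv
  rw [hv, Matrix.smul_mulVec, Matrix.one_mulVec]

lemma charpolyC_eq {n : ℕ} (T : Matrix (Fin n) (Fin n) ℤ) :
    (T.map fun x => (x : ℂ)).charpoly = T.charpoly.map (Int.castRingHom ℂ) :=
  Matrix.charpoly_map T (Int.castRingHom ℂ)

lemma charpolyR_eq {n : ℕ} (T : Matrix (Fin n) (Fin n) ℤ) :
    (intMat T).charpoly = T.charpoly.map (Int.castRingHom ℝ) :=
  Matrix.charpoly_map T (Int.castRingHom ℝ)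

lemma intMat_mapC {n : ℕ} (T : Matrix (Fin n) (Fin n) ℤ) :
    (intMat T).map (fun r : ℝ => (r : ℂ)) = T.map fun x => (x : ℂ) := by
  ext i j
  simp [intMat, Matrix.map_apply]

lemma intMat_pow {n : ℕ} (T : Matrix (Fin n) (Fin n) ℤ) (k : ℕ) :
    intMat (T ^ k) = intMat T ^ k := by
  show (Int.castRingHom ℝ).mapMatrix (T ^ k) = ((Int.castRingHom ℝ).mapMatrix T) ^ k
  exact map_pow _ T k

-- ### Arithmetic lemmas on the roots

lemma pQ_irred {n : ℕ} {T : Matrix (Fin n) (Fin n) ℤ} (hirr : Irreducible T.charpoly) :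
    Irreducible (T.charpoly.map (Int.castRingHom ℚ)) := by
  have := (T.charpoly_monic.irreducible_iff_irreducible_map_fraction_map (K := ℚ)).mp hirr
  rwa [algebraMap_int_eq] at this

lemma pC_eq_pQ_map {n : ℕ} (T : Matrix (Fin n) (Fin n) ℤ) :
    T.charpoly.map (Int.castRingHom ℂ) =
      (T.charpoly.map (Int.castRingHom ℚ)).map (algebraMap ℚ ℂ) := by
  rw [Polynomial.map_map]
  congr 1

lemma pC_eq_pR_map {n : ℕ} (T : Matrix (Fin n) (Fin n) ℤ) :
    T.charpoly.map (Int.castRingHom ℂ) =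
      (T.charpoly.map (Int.castRingHom ℝ)).map (algebraMap ℝ ℂ) := by
  rw [Polynomial.map_map]
  congr 1

lemma allRootsSameAbs {n m : ℕ} (hm : m ≠ 0) {T : Matrix (Fin n) (Fin n) ℤ}
    (hirr : Irreducible T.charpoly)
    {α : ℂ} (hα : (T.charpoly.map (Int.castRingHom ℂ)).IsRoot α) {c : ℚ}
    (hc : α ^ m = (c : ℂ)) :
    ∀ β : ℂ, (T.charpoly.map (Int.castRingHom ℂ)).IsRoot β → ‖β‖ = ‖α‖ := by
  have hmono : (T.charpoly.map (Int.castRingHom ℚ)).Monic := T.charpoly_monic.map _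
  have hirrQ := pQ_irred hirr
  have haev : Polynomial.aeval α (T.charpoly.map (Int.castRingHom ℚ)) = 0 := by
    rw [Polynomial.aeval_def, ← Polynomial.eval_map, ← pC_eq_pQ_map]; exact hα
  have hmin : minpoly ℚ α = T.charpoly.map (Int.castRingHom ℚ) :=
    (minpoly.eq_of_irreducible_of_monic hirrQ haev hmono).symm
  have hdvd : (T.charpoly.map (Int.castRingHom ℚ)) ∣ (X ^ m - C c) := by
    rw [← hmin]
    apply minpoly.dvd
    simp [hc]
  intro β hβ
  have hβm : β ^ m = (c : ℂ) := by
    have hdvdC : T.charpoly.map (Int.castRingHom ℂ) ∣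
        ((X ^ m - C c).map (algebraMap ℚ ℂ)) := by
      rw [pC_eq_pQ_map]; exact Polynomial.map_dvd _ hdvd
    have h2 := hβ.dvd hdvdC
    rw [Polynomial.map_sub, Polynomial.map_pow, Polynomial.map_X, Polynomial.map_C] at h2
    rw [Polynomial.IsRoot, Polynomial.eval_sub, Polynomial.eval_pow, Polynomial.eval_X,
      Polynomial.eval_C, sub_eq_zero] at h2
    simpa using h2
  have h1 : ‖β‖ ^ m = ‖α‖ ^ m := by
    rw [← norm_pow, ← norm_pow, hβm, hc]
  exact (pow_left_strictMonoOn₀ hm).injOn (by simp [norm_nonneg])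
    (by simp [norm_nonneg]) h1

lemma root_ne_zero {n : ℕ} (hn : 2 ≤ n) {T : Matrix (Fin n) (Fin n) ℤ}
    (hirr : Irreducible T.charpoly)
    {β : ℂ} (hβ : (T.charpoly.map (Int.castRingHom ℂ)).IsRoot β) : β ≠ 0 := by
  rintro rfl
  have hmono : (T.charpoly.map (Int.castRingHom ℚ)).Monic := T.charpoly_monic.map _
  have hirrQ := pQ_irred hirr
  have h0 : (T.charpoly.map (Int.castRingHom ℚ)).IsRoot 0 := by
    rw [Polynomial.IsRoot, ← Polynomial.coeff_zero_eq_eval_zero]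
    rw [Polynomial.IsRoot, ← Polynomial.coeff_zero_eq_eval_zero] at hβ
    have hcast : ((T.charpoly.map (Int.castRingHom ℚ)).coeff 0 : ℂ) = 0 := by
      rw [pC_eq_pQ_map] at hβ
      simpa [Polynomial.coeff_map] using hβ
    exact_mod_cast hcast
  have hX : (X : ℚ[X]) ∣ T.charpoly.map (Int.castRingHom ℚ) := by
    rw [Polynomial.X_dvd_iff, Polynomial.coeff_zero_eq_eval_zero]; exact h0
  obtain ⟨k, hk⟩ := hX
  rcases hirrQ.isUnit_or_isUnit hk with h | h
  · exact Polynomial.not_isUnit_X h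
  · have hdeg : (T.charpoly.map (Int.castRingHom ℚ)).natDegree = n := by
      rw [T.charpoly_monic.natDegree_map, Matrix.charpoly_natDegree_eq_dim, Fintype.card_fin]
    rw [hk, Polynomial.natDegree_mul Polynomial.X_ne_zero (fun h0 => by simp [h0] at h),
      Polynomial.natDegree_X, Polynomial.natDegree_eq_zero_of_isUnit h] at hdeg
    omega

lemma pC_ne_zero {n : ℕ} (T : Matrix (Fin n) (Fin n) ℤ) :
    T.charpoly.map (Int.castRingHom ℂ) ≠ 0 :=
  (T.charpoly_monic.map _).ne_zero

lemma pC_roots_card {n : ℕ} (T : Matrix (Fin n) (Fin n) ℤ) :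
    Multiset.card (T.charpoly.map (Int.castRingHom ℂ)).roots = n := by
  have hs : (T.charpoly.map (Int.castRingHom ℂ)).Splits :=
    IsAlgClosed.splits _
  rw [Polynomial.splits_iff_card_roots.mp hs, (T.charpoly_monic).natDegree_map,
    Matrix.charpoly_natDegree_eq_dim, Fintype.card_fin]

lemma pC_roots_nodup {n : ℕ} {T : Matrix (Fin n) (Fin n) ℤ} (hirr : Irreducible T.charpoly) :
    (T.charpoly.map (Int.castRingHom ℂ)).roots.Nodup := by
  have hsep : (T.charpoly.map (Int.castRingHom ℚ)).Separable := (pQ_irred hirr).separable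
  have hsp : (T.charpoly.map (Int.castRingHom ℂ)).Separable := by
    rw [pC_eq_pQ_map]
    exact hsep.map
  exact Polynomial.nodup_roots hsp

lemma pC_mem_roots {n : ℕ} {T : Matrix (Fin n) (Fin n) ℤ} {z : ℂ} :
    z ∈ (T.charpoly.map (Int.castRingHom ℂ)).roots ↔
      (T.charpoly.map (Int.castRingHom ℂ)).IsRoot z := by
  rw [Polynomial.mem_roots (pC_ne_zero T)]

lemma conj_root {n : ℕ} {T : Matrix (Fin n) (Fin n) ℤ} {z : ℂ}
    (hz : (T.charpoly.map (Int.castRingHom ℂ)).IsRoot z) :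
    (T.charpoly.map (Int.castRingHom ℂ)).IsRoot ((starRingEnd ℂ) z) := by
  rw [pC_eq_pR_map] at hz ⊢
  rw [Polynomial.IsRoot, Polynomial.eval_map, ← Polynomial.aeval_def] at hz ⊢
  rw [Polynomial.aeval_conj, hz, map_zero]

lemma real_root_transfer {n : ℕ} {T : Matrix (Fin n) (Fin n) ℤ} {t : ℝ}
    (h : (T.charpoly.map (Int.castRingHom ℂ)).IsRoot ((t : ℝ) : ℂ)) :
    (T.charpoly.map (Int.castRingHom ℝ)).IsRoot t := by
  rw [pC_eq_pR_map, Polynomial.IsRoot, Polynomial.eval_map] at h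
  have h2 : ((Polynomial.eval t (T.charpoly.map (Int.castRingHom ℝ)) : ℝ) : ℂ) = 0 := by
    rw [show ((t : ℝ) : ℂ) = algebraMap ℝ ℂ t from rfl, Polynomial.eval₂_at_apply] at h
    exact h
  exact_mod_cast h2

lemma real_root_of_abs {z : ℂ} {r : ℝ} (him : z.im = 0) (habs : ‖z‖ = r) :
    z = (r : ℂ) ∨ z = ((-r : ℝ) : ℂ) := by
  have hz : z = ((z.re : ℝ) : ℂ) := by
    apply Complex.ext <;> simp [him]
  rw [hz, Complex.norm_real, Real.norm_eq_abs] at habs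
  have hr' : 0 ≤ r := habs ▸ abs_nonneg z.re
  rcases (abs_eq hr').mp habs with h | h
  · left; rw [hz, h]
  · right; rw [hz, h]

-- ### Structure of the root multiset

lemma exists_nonreal_root {T : Matrix (Fin 3) (Fin 3) ℤ} (hirr : Irreducible T.charpoly)
    {r : ℝ} (hr : 0 < r)
    (hall : ∀ β : ℂ, (T.charpoly.map (Int.castRingHom ℂ)).IsRoot β → ‖β‖ = r) :
    ∃ σ : ℂ, (T.charpoly.map (Int.castRingHom ℂ)).IsRoot σ ∧ σ.im ≠ 0 := by
  by_contra hcon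
  push_neg at hcon
  obtain ⟨a, b, c, hR⟩ := Multiset.card_eq_three.mp (pC_roots_card T)
  have hnd := pC_roots_nodup hirr
  rw [hR] at hnd
  have hmem : ∀ z ∈ ({a, b, c} : Multiset ℂ),
      (T.charpoly.map (Int.castRingHom ℂ)).IsRoot z := by
    intro z hz
    exact pC_mem_roots.mp (hR ▸ hz)
  have key : ∀ z ∈ ({a, b, c} : Multiset ℂ), z = (r : ℂ) ∨ z = ((-r : ℝ) : ℂ) := by
    intro z hz
    exact real_root_of_abs (hcon z (hmem z hz)) (hall z (hmem z hz))
  have hab : a ≠ b := by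
    intro h; rw [h] at hnd; simp [Multiset.nodup_cons] at hnd
  have hac : a ≠ c := by
    intro h; rw [h] at hnd; simp [Multiset.nodup_cons] at hnd
  have hbc : b ≠ c := by
    intro h; rw [h] at hnd; simp [Multiset.nodup_cons] at hnd
  have hrr : ((r : ℝ) : ℂ) ≠ ((-r : ℝ) : ℂ) := by
    intro h
    rw [Complex.ofReal_inj] at h
    linarith
  rcases key a (by simp) with h1 | h1 <;> rcases key b (by simp) with h2 | h2 <;>
    rcases key c (by simp) with h3 | h3 <;> simp_all

lemma third_root {T : Matrix (Fin 3) (Fin 3) ℤ} (hirr : Irreducible T.charpoly) {μ : ℂ}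
    (hμ : (T.charpoly.map (Int.castRingHom ℂ)).IsRoot μ) (him : μ.im ≠ 0) :
    ∃ ν : ℂ, (T.charpoly.map (Int.castRingHom ℂ)).IsRoot ν ∧ ν.im = 0 ∧
      (T.charpoly.map (Int.castRingHom ℂ)).roots.prod = μ * (starRingEnd ℂ) μ * ν := by
  set S := (T.charpoly.map (Int.castRingHom ℂ)).roots with hS
  have hcard : Multiset.card S = 3 := pC_roots_card T
  have hnd : S.Nodup := pC_roots_nodup hirr
  have hμS : μ ∈ S := pC_mem_roots.mpr hμ
  have hcμS : (starRingEnd ℂ) μ ∈ S := pC_mem_roots.mpr (conj_root hμ)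
  have hne : (starRingEnd ℂ) μ ≠ μ := fun h => him (Complex.conj_eq_iff_im.mp h)
  have hcμ' : (starRingEnd ℂ) μ ∈ S.erase μ := (hnd.mem_erase_iff).mpr ⟨hne, hcμS⟩
  have hcard1 : Multiset.card ((S.erase μ).erase ((starRingEnd ℂ) μ)) = 1 := by
    rw [Multiset.card_erase_of_mem hcμ', Multiset.card_erase_of_mem hμS, hcard]
    rfl
  obtain ⟨ν, hν⟩ := Multiset.card_eq_one.mp hcard1
  have hiter : S = μ ::ₘ (starRingEnd ℂ) μ ::ₘ {ν} := by
    rw [← hν, Multiset.cons_erase hcμ', Multiset.cons_erase hμS]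
  have hνmem2 : ν ∈ (S.erase μ).erase ((starRingEnd ℂ) μ) := by rw [hν]; simp
  have hνSμ : ν ∈ S.erase μ := Multiset.mem_of_le (Multiset.erase_le _ _) hνmem2
  have hνS : ν ∈ S := Multiset.mem_of_le (Multiset.erase_le _ _) hνSμ
  have hνne1 : ν ≠ μ := ((hnd.mem_erase_iff).mp hνSμ).1
  have hνne2 : ν ≠ (starRingEnd ℂ) μ := (((hnd.erase μ).mem_erase_iff).mp hνmem2).1
  have hνroot : (T.charpoly.map (Int.castRingHom ℂ)).IsRoot ν := pC_mem_roots.mp hνS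
  refine ⟨ν, hνroot, ?_, ?_⟩
  · have hcνS : (starRingEnd ℂ) ν ∈ S := pC_mem_roots.mpr (conj_root hνroot)
    rw [hiter] at hcνS
    simp only [Multiset.mem_cons, Multiset.mem_singleton] at hcνS
    rcases hcνS with h | h | h
    · exact absurd (by
        have := congrArg (starRingEnd ℂ) h
        simpa using this) hνne2
    · exact absurd (by
        have := congrArg (starRingEnd ℂ) h
        simpa using this) hνne1
    · exact Complex.conj_eq_iff_im.mp h
  · rw [hiter]
    simp [Multiset.prod_cons, mul_assoc]

lemma n2_real_sq {T : Matrix (Fin 2) (Fin 2) ℤ} (hirr : Irreducible T.charpoly) {t : ℝ}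
    (ht : (T.charpoly.map (Int.castRingHom ℂ)).IsRoot ((t : ℝ) : ℂ))
    (hall : ∀ β : ℂ, (T.charpoly.map (Int.castRingHom ℂ)).IsRoot β →
      ‖β‖ = |t|) :
    t ≠ 0 ∧ T.charpoly.map (Int.castRingHom ℝ) = X ^ 2 - C (t ^ 2) := by
  set S := (T.charpoly.map (Int.castRingHom ℂ)).roots with hS
  have hcard : Multiset.card S = 2 := pC_roots_card T
  have hnd : S.Nodup := pC_roots_nodup hirr
  have htS : ((t : ℝ) : ℂ) ∈ S := pC_mem_roots.mpr ht
  have hcard1 : Multiset.card (S.erase ((t : ℝ) : ℂ)) = 1 := by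
    rw [Multiset.card_erase_of_mem htS, hcard]; rfl
  obtain ⟨s, hs⟩ := Multiset.card_eq_one.mp hcard1
  have hiter : S = ((t : ℝ) : ℂ) ::ₘ {s} := by rw [← hs, Multiset.cons_erase htS]
  have hsmem : s ∈ S.erase ((t : ℝ) : ℂ) := by rw [hs]; simp
  have hsS : s ∈ S := Multiset.mem_of_le (Multiset.erase_le _ _) hsmem
  have hsne : s ≠ ((t : ℝ) : ℂ) := ((hnd.mem_erase_iff).mp hsmem).1
  have hsroot : (T.charpoly.map (Int.castRingHom ℂ)).IsRoot s := pC_mem_roots.mp hsS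
  have hsim : s.im = 0 := by
    have hcsS : (starRingEnd ℂ) s ∈ S := pC_mem_roots.mpr (conj_root hsroot)
    rw [hiter] at hcsS
    simp only [Multiset.mem_cons, Multiset.mem_singleton] at hcsS
    rcases hcsS with h | h
    · exact absurd (by
        have := congrArg (starRingEnd ℂ) h
        simpa using this) hsne
    · exact Complex.conj_eq_iff_im.mp h
  have hsabs : ‖s‖ = |t| := hall s hsroot
  have hst : s = ((-t : ℝ) : ℂ) := by
    rcases real_root_of_abs hsim hsabs with h | h <;> rcases abs_cases t with ⟨h1, h2⟩ | ⟨h1, h2⟩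
    · rw [h1] at h; exact absurd h hsne
    · rw [h1] at h; exact h
    · rw [h1] at h; exact h
    · rw [h1] at h
      refine absurd ?_ hsne
      rw [h]
      norm_num
  have ht0 : t ≠ 0 := by
    intro h0
    apply hsne
    rw [hst, h0]
    norm_num
  refine ⟨ht0, ?_⟩
  have hsplit : (T.charpoly.map (Int.castRingHom ℂ)).Splits :=
    IsAlgClosed.splits _
  have hfact := hsplit.eq_prod_roots_of_monic (T.charpoly_monic.map _)
  rw [← hS, hiter, hst] at hfact
  simp only [Multiset.map_cons, Multiset.map_singleton, Multiset.prod_cons,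
    Multiset.prod_singleton] at hfact
  apply Polynomial.map_injective (algebraMap ℝ ℂ) (algebraMap ℝ ℂ).injective
  rw [← pC_eq_pR_map, hfact]
  rw [Polynomial.map_sub, Polynomial.map_pow, Polynomial.map_X, Polynomial.map_C]
  rw [show (algebraMap ℝ ℂ) (t ^ 2) = ((t : ℂ)) ^ 2 by
    rw [show (algebraMap ℝ ℂ) (t ^ 2) = ((t ^ 2 : ℝ) : ℂ) from rfl]; push_cast; ring]
  push_cast
  simp only [map_neg, map_pow]
  ring

lemma ch_sq {T : Matrix (Fin 2) (Fin 2) ℤ} {t : ℝ}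
    (h : T.charpoly.map (Int.castRingHom ℝ) = X ^ 2 - C (t ^ 2)) :
    intMat T ^ 2 = (t ^ 2) • (1 : Matrix (Fin 2) (Fin 2) ℝ) := by
  have hCH := Matrix.aeval_self_charpoly (intMat T)
  rw [charpolyR_eq, h, map_sub, Polynomial.aeval_X_pow, Polynomial.aeval_C,
    sub_eq_zero] at hCH
  rw [hCH, Algebra.algebraMap_eq_smul_one]

-- ### Similarity constructions

lemma real_eigenvec_complexify {N : ℕ} (M : Matrix (Fin N) (Fin N) ℝ) {u : Fin N → ℝ} {t : ℝ}
    (hu : M *ᵥ u = t • u) :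
    (M.map fun r : ℝ => (r : ℂ)) *ᵥ (fun i => (u i : ℂ)) =
      ((t : ℂ)) • (fun i => (u i : ℂ)) := by
  funext i
  have h := congrFun hu i
  simp only [Matrix.mulVec, dotProduct, Pi.smul_apply, smul_eq_mul] at h ⊢
  simp only [Matrix.map_apply]
  exact_mod_cast congrArg (fun r : ℝ => (r : ℂ)) h

lemma conj_eigenvec {N : ℕ} (M : Matrix (Fin N) (Fin N) ℝ) {v : Fin N → ℂ} {μ : ℂ}
    (hv : (M.map fun r : ℝ => (r : ℂ)) *ᵥ v = μ • v) :
    (M.map fun r : ℝ => (r : ℂ)) *ᵥ (fun i => (starRingEnd ℂ) (v i)) =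
      ((starRingEnd ℂ) μ) • (fun i => (starRingEnd ℂ) (v i)) := by
  funext i
  have h := congrArg (starRingEnd ℂ) (congrFun hv i)
  simpa [Matrix.mulVec, dotProduct, Matrix.map_apply, map_sum, _root_.map_mul,
    Complex.conj_ofReal] using h

lemma eig_re {N : ℕ} (M : Matrix (Fin N) (Fin N) ℝ) {v : Fin N → ℂ} {μ : ℂ}
    (hv : (M.map fun r : ℝ => (r : ℂ)) *ᵥ v = μ • v) (i : Fin N) :
    (M *ᵥ fun j => (v j).re) i = μ.re * (v i).re - μ.im * (v i).im := by
  have h := congrArg Complex.re (congrFun hv i)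
  simpa [Matrix.mulVec, dotProduct, Matrix.map_apply, Complex.re_sum,
    Complex.mul_re, Complex.mul_im] using h

lemma eig_im {N : ℕ} (M : Matrix (Fin N) (Fin N) ℝ) {v : Fin N → ℂ} {μ : ℂ}
    (hv : (M.map fun r : ℝ => (r : ℂ)) *ᵥ v = μ • v) (i : Fin N) :
    (M *ᵥ fun j => (v j).im) i = μ.re * (v i).im + μ.im * (v i).re := by
  have h := congrArg Complex.im (congrFun hv i)
  simpa [Matrix.mulVec, dotProduct, Matrix.map_apply, Complex.im_sum,
    Complex.mul_re, Complex.mul_im] using h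

lemma eigenvectors_li {N k : ℕ} (A : Matrix (Fin N) (Fin N) ℂ) (μs : Fin k → ℂ)
    (xs : Fin k → (Fin N → ℂ)) (hinj : Function.Injective μs)
    (heig : ∀ i, A *ᵥ xs i = μs i • xs i) (hne : ∀ i, xs i ≠ 0) :
    LinearIndependent ℂ xs :=
  Module.End.eigenvectors_linearIndependent' (Matrix.mulVecLin A) μs hinj xs
    (fun i => ⟨Module.End.mem_eigenspace_iff.mpr
      (by simpa [Matrix.mulVecLin_apply] using heig i), hne i⟩)

lemma conj_ne_of_im_ne {μ : ℂ} (hμ : μ.im ≠ 0) : (starRingEnd ℂ) μ ≠ μ :=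
  fun h => hμ (Complex.conj_eq_iff_im.mp h)

lemma sim2 (M : Matrix (Fin 2) (Fin 2) ℝ) {μ : ℂ} (hμ : μ.im ≠ 0)
    {v : Fin 2 → ℂ} (hv0 : v ≠ 0) (hv : (M.map fun r : ℝ => (r : ℂ)) *ᵥ v = μ • v) :
    ∃ Q : Matrix (Fin 2) (Fin 2) ℝ, IsUnit Q ∧ IsSimilarityMatrix (Q⁻¹ * M * Q) := by
  have hsv0 : (fun i => (starRingEnd ℂ) (v i)) ≠ 0 := by
    intro h
    apply hv0
    funext i
    have := congrFun h i
    simpa using this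
  have hμ0 : μ ≠ 0 := fun h => hμ (by rw [h]; simp)
  have hcpos : 0 < ‖μ‖ := norm_pos_iff.mpr hμ0
  set a := μ.re with ha
  set b := μ.im with hb
  set x : Fin 2 → ℝ := fun i => (v i).re with hx
  set y : Fin 2 → ℝ := fun i => (v i).im with hy
  set Q : Matrix (Fin 2) (Fin 2) ℝ := Matrix.of fun i j => if j = 0 then x i else y i with hQ
  set C : Matrix (Fin 2) (Fin 2) ℝ := !![a, b; -b, a] with hC
  have hMQ : M * Q = Q * C := by
    ext i j
    fin_cases j
    · have h := eig_re M hv i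
      simp only [Matrix.mulVec, dotProduct, Fin.sum_univ_two] at h
      simp only [Matrix.mul_apply, Fin.sum_univ_two, hQ, hC, Matrix.of_apply]
      simp only [Fin.isValue, if_true, if_pos]
      norm_num
      linarith [h]
    · have h := eig_im M hv i
      simp only [Matrix.mulVec, dotProduct, Fin.sum_univ_two] at h
      simp only [Matrix.mul_apply, Fin.sum_univ_two, hQ, hC, Matrix.of_apply]
      norm_num
      linarith [h]
  have hdetne : Q.det ≠ 0 := by
    intro hd
    obtain ⟨w, hw0, hw⟩ := Matrix.exists_mulVec_eq_zero_iff.mpr hd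
    have hli : LinearIndependent ℂ ![v, fun i => (starRingEnd ℂ) (v i)] := by
      refine eigenvectors_li (M.map fun r : ℝ => (r : ℂ)) ![μ, (starRingEnd ℂ) μ]
        ![v, fun i => (starRingEnd ℂ) (v i)] ?_ ?_ ?_
      · intro i j hij
        fin_cases i <;> fin_cases j <;>
          simp only [Matrix.cons_val_zero, Matrix.cons_val_one, Matrix.head_cons] at hij ⊢
        · exact (conj_ne_of_im_ne hμ hij.symm).elim
        · exact (conj_ne_of_im_ne hμ hij).elim
      · intro i
        fin_cases i
        · simpa using hv
        · simpa using conj_eigenvec M hv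
      · intro i
        fin_cases i
        · simpa using hv0
        · simpa using hsv0
    have hcomb : (((w 0 : ℂ) - (w 1 : ℂ) * Complex.I) • v +
        (((w 0 : ℂ) + (w 1 : ℂ) * Complex.I)) • (fun i => (starRingEnd ℂ) (v i))) = 0 := by
      funext i
      have h := congrFun hw i
      simp only [Matrix.mulVec, dotProduct, Fin.sum_univ_two, hQ, Matrix.of_apply,
        Pi.zero_apply, if_true, if_pos] at h
      norm_num at h
      apply Complex.ext <;>
        simp [Complex.mul_re, Complex.mul_im, Complex.add_re, Complex.add_im] <;>
        ring_nf <;>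
        linarith [h]
    have hcoef := Fintype.linearIndependent_iff.mp hli
      ![(w 0 : ℂ) - (w 1 : ℂ) * Complex.I, (w 0 : ℂ) + (w 1 : ℂ) * Complex.I]
      (by simpa [Fin.sum_univ_two] using hcomb)
    have h0 := hcoef 0
    have h1 := hcoef 1
    simp only [Matrix.cons_val_zero, Matrix.cons_val_one, Matrix.head_cons] at h0 h1
    apply hw0
    have hw00 : (w 0 : ℂ) = 0 := by linear_combination (h0 + h1) / 2
    have hw1I : (w 1 : ℂ) * Complex.I = 0 := by linear_combination (h1 - h0) / 2
    have hw11 : (w 1 : ℂ) = 0 := by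
      rcases mul_eq_zero.mp hw1I with h | h
      · exact h
      · exact absurd h Complex.I_ne_zero
    funext i
    fin_cases i
    · exact_mod_cast hw00
    · exact_mod_cast hw11
  have hQu : IsUnit Q := (Matrix.isUnit_iff_isUnit_det Q).mpr (isUnit_iff_ne_zero.mpr hdetne)
  refine ⟨Q, hQu, ?_⟩
  have hQinv : Q⁻¹ * M * Q = C := by
    rw [Matrix.mul_assoc, hMQ, ← Matrix.mul_assoc,
      Matrix.nonsing_inv_mul Q (isUnit_iff_ne_zero.mpr hdetne), Matrix.one_mul]
  rw [hQinv]
  have habs : a ^ 2 + b ^ 2 = ‖μ‖ ^ 2 := by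
    rw [Complex.sq_norm, Complex.normSq_apply]; ring
  refine ⟨‖μ‖, hcpos, ‖μ‖⁻¹ • C, ?_, ?_⟩
  · have hCT : Cᵀ = !![a, -b; b, a] := by
      ext i j
      fin_cases i <;> fin_cases j <;> simp [hC]
    have hCC : Cᵀ * C = (a ^ 2 + b ^ 2) • (1 : Matrix (Fin 2) (Fin 2) ℝ) := by
      rw [hCT]
      ext i j
      fin_cases i <;> fin_cases j <;>
        simp [hC, Matrix.mul_apply, Fin.sum_univ_two,
          Matrix.one_apply, Matrix.smul_apply] <;> ring
    rw [Matrix.transpose_smul, Matrix.smul_mul, Matrix.mul_smul, hCC, smul_smul, smul_smul, habs]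
    have h1 : ‖μ‖⁻¹ * ‖μ‖⁻¹ * ‖μ‖ ^ 2 = 1 := by
      field_simp
    rw [h1, one_smul]
  · rw [smul_smul, mul_inv_cancel₀ (ne_of_gt hcpos), one_smul]

lemma sim3 (M : Matrix (Fin 3) (Fin 3) ℝ) {μ : ℂ} (hμ : μ.im ≠ 0) {t : ℝ}
    (habst : |t| = ‖μ‖)
    {u : Fin 3 → ℝ} (hu0 : u ≠ 0) (hu : M *ᵥ u = t • u)
    {v : Fin 3 → ℂ} (hv0 : v ≠ 0) (hv : (M.map fun r : ℝ => (r : ℂ)) *ᵥ v = μ • v) :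
    ∃ Q : Matrix (Fin 3) (Fin 3) ℝ, IsUnit Q ∧ IsSimilarityMatrix (Q⁻¹ * M * Q) := by
  have hμ0 : μ ≠ 0 := fun h => hμ (by rw [h]; simp)
  have hcpos : 0 < ‖μ‖ := norm_pos_iff.mpr hμ0
  have hsv0 : (fun i => (starRingEnd ℂ) (v i)) ≠ 0 := by
    intro h
    apply hv0
    funext i
    have := congrFun h i
    simpa using this
  have huc0 : (fun i => (u i : ℂ)) ≠ 0 := by
    intro h
    apply hu0
    funext i
    have := congrFun h i
    simpa using this
  have huc := real_eigenvec_complexify M hu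
  set a := μ.re with ha
  set b := μ.im with hb
  set x : Fin 3 → ℝ := fun i => (v i).re with hx
  set y : Fin 3 → ℝ := fun i => (v i).im with hy
  set Q : Matrix (Fin 3) (Fin 3) ℝ :=
    Matrix.of fun i j => if j = 0 then u i else if j = 1 then x i else y i with hQ
  set D : Matrix (Fin 3) (Fin 3) ℝ := !![t, 0, 0; 0, a, b; 0, -b, a] with hD
  have hMQ : M * Q = Q * D := by
    ext i j
    fin_cases j
    · have h := congrFun hu i
      simp only [Matrix.mulVec, dotProduct, Fin.sum_univ_three, Pi.smul_apply,
        smul_eq_mul] at h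
      simp only [Matrix.mul_apply, Fin.sum_univ_three, hQ, hD, Matrix.of_apply]
      simp [Matrix.vecHead, Matrix.vecTail]
      linarith [h]
    · have h := eig_re M hv i
      simp only [Matrix.mulVec, dotProduct, Fin.sum_univ_three] at h
      simp only [Matrix.mul_apply, Fin.sum_univ_three, hQ, hD, Matrix.of_apply]
      simp [Matrix.vecHead, Matrix.vecTail]
      linarith [h]
    · have h := eig_im M hv i
      simp only [Matrix.mulVec, dotProduct, Fin.sum_univ_three] at h
      simp only [Matrix.mul_apply, Fin.sum_univ_three, hQ, hD, Matrix.of_apply]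
      simp [Matrix.vecHead, Matrix.vecTail]
      linarith [h]
  have htne1 : ((t : ℂ)) ≠ μ := by
    intro h
    apply hμ
    show μ.im = 0
    rw [← h]
    simp
  have htne2 : ((t : ℂ)) ≠ (starRingEnd ℂ) μ := by
    intro h
    apply hμ
    show μ.im = 0
    have h2 := congrArg Complex.im h
    simp at h2
    linarith [h2]
  have hdetne : Q.det ≠ 0 := by
    intro hd
    obtain ⟨w, hw0, hw⟩ := Matrix.exists_mulVec_eq_zero_iff.mpr hd
    have hli : LinearIndependent ℂ
        ![(fun i => (u i : ℂ)), v, fun i => (starRingEnd ℂ) (v i)] := by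
      refine eigenvectors_li (M.map fun r : ℝ => (r : ℂ)) ![(t : ℂ), μ, (starRingEnd ℂ) μ]
        ![(fun i => (u i : ℂ)), v, fun i => (starRingEnd ℂ) (v i)] ?_ ?_ ?_
      · intro i j hij
        fin_cases i <;> fin_cases j <;>
          simp only [Matrix.cons_val_zero, Matrix.cons_val_one, Matrix.head_cons,
            Matrix.cons_val_two, Matrix.tail_cons] at hij ⊢
        · exact (htne1 hij).elim
        · exact (htne2 hij).elim
        · exact (htne1 hij.symm).elim
        · exact (conj_ne_of_im_ne hμ hij.symm).elim
        · exact (htne2 hij.symm).elim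
        · exact (conj_ne_of_im_ne hμ hij).elim
      · intro i
        fin_cases i
        · simpa using huc
        · simpa using hv
        · simpa using conj_eigenvec M hv
      · intro i
        fin_cases i
        · simpa using huc0
        · simpa using hv0
        · simpa using hsv0
    have hcomb : ((2 * (w 0 : ℂ)) • (fun i => (u i : ℂ)) +
        ((w 1 : ℂ) - (w 2 : ℂ) * Complex.I) • v +
        ((w 1 : ℂ) + (w 2 : ℂ) * Complex.I) • (fun i => (starRingEnd ℂ) (v i))) = 0 := by
      funext i
      have h := congrFun hw i
      simp only [Matrix.mulVec, dotProduct, Fin.sum_univ_three, hQ, Matrix.of_apply,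
        Pi.zero_apply] at h
      simp [Matrix.vecHead, Matrix.vecTail] at h
      simp only [Pi.add_apply, Pi.smul_apply, smul_eq_mul, Pi.zero_apply]
      apply Complex.ext <;>
        simp [Complex.mul_re, Complex.mul_im, Complex.add_re, Complex.add_im] <;>
        ring_nf <;>
        linarith [h]
    have hcoef := Fintype.linearIndependent_iff.mp hli
      ![2 * (w 0 : ℂ), (w 1 : ℂ) - (w 2 : ℂ) * Complex.I, (w 1 : ℂ) + (w 2 : ℂ) * Complex.I]
      (by simpa [Fin.sum_univ_three, add_assoc] using hcomb)
    have h0 := hcoef 0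
    have h1 := hcoef 1
    have h2 := hcoef 2
    simp only [Matrix.cons_val_zero, Matrix.cons_val_one, Matrix.head_cons,
      Matrix.cons_val_two, Matrix.tail_cons] at h0 h1 h2
    apply hw0
    have hw00 : (w 0 : ℂ) = 0 := by linear_combination h0 / 2
    have hw10 : (w 1 : ℂ) = 0 := by linear_combination (h1 + h2) / 2
    have hw2I : (w 2 : ℂ) * Complex.I = 0 := by linear_combination (h2 - h1) / 2
    have hw20 : (w 2 : ℂ) = 0 := by
      rcases mul_eq_zero.mp hw2I with h | h
      · exact h
      · exact absurd h Complex.I_ne_zero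
    funext i
    fin_cases i
    · exact_mod_cast hw00
    · exact_mod_cast hw10
    · exact_mod_cast hw20
  have hQu : IsUnit Q := (Matrix.isUnit_iff_isUnit_det Q).mpr (isUnit_iff_ne_zero.mpr hdetne)
  refine ⟨Q, hQu, ?_⟩
  have hQinv : Q⁻¹ * M * Q = D := by
    rw [Matrix.mul_assoc, hMQ, ← Matrix.mul_assoc,
      Matrix.nonsing_inv_mul Q (isUnit_iff_ne_zero.mpr hdetne), Matrix.one_mul]
  rw [hQinv]
  have habs : a ^ 2 + b ^ 2 = ‖μ‖ ^ 2 := by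
    rw [Complex.sq_norm, Complex.normSq_apply]; ring
  have ht2 : t ^ 2 = ‖μ‖ ^ 2 := by
    rw [← habst, sq_abs]
  refine ⟨‖μ‖, hcpos, ‖μ‖⁻¹ • D, ?_, ?_⟩
  · have hDT : Dᵀ = !![t, 0, 0; 0, a, -b; 0, b, a] := by
      ext i j
      fin_cases i <;> fin_cases j <;> simp [hD, Matrix.vecHead, Matrix.vecTail]
    have hDD : Dᵀ * D = (‖μ‖ ^ 2) • (1 : Matrix (Fin 3) (Fin 3) ℝ) := by
      rw [hDT]
      ext i j
      fin_cases i <;> fin_cases j <;>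
        simp [hD, Matrix.mul_apply, Fin.sum_univ_three, Matrix.one_apply,
          Matrix.smul_apply, Matrix.vecHead, Matrix.vecTail] <;>
        ring_nf <;>
        linarith [habs, ht2]
    rw [Matrix.transpose_smul, Matrix.smul_mul, Matrix.mul_smul, hDD, smul_smul, smul_smul]
    have h1 : ‖μ‖⁻¹ * ‖μ‖⁻¹ * ‖μ‖ ^ 2 = 1 := by
      field_simp
    rw [h1, one_smul]
  · rw [smul_smul, mul_inv_cancel₀ (ne_of_gt hcpos), one_smul]

end AuxProof

/-- if `T ∈ M_n(ℤ)` (`n = 2, 3`) has irreducible characteristic polynomial and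
no power `T^j` (`1 ≤ j ≤ n`) is conjugate over `ℝ` to a similarity matrix, then all positive
integer powers of the moduli of the eigenvalues of `T` are irrational. -/
theorem eigenvalue_modulus_powers_irrational {n : ℕ} (hn : n = 2 ∨ n = 3)
    (T : Matrix (Fin n) (Fin n) ℤ) (hirr : Irreducible T.charpoly)
    (hsim : ∀ j : ℕ, 1 ≤ j → j ≤ n →
      ¬ ∃ Q : Matrix (Fin n) (Fin n) ℝ, IsUnit Q ∧
          IsSimilarityMatrix (Q⁻¹ * intMat (T ^ j) * Q)) :
    ∀ μ : ℂ, (T.map fun x => (x : ℂ)).charpoly.IsRoot μ →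
      ∀ m : ℕ, 1 ≤ m → Irrational (‖μ‖ ^ m) := by
  intro μ hμ m hm
  rw [charpolyC_eq] at hμ
  by_contra hrat
  obtain ⟨q, hq⟩ : ∃ q : ℚ, (q : ℝ) = ‖μ‖ ^ m := by
    simpa [Irrational, not_not, Set.mem_range] using hrat
  have hm0 : m ≠ 0 := by omega
  have hn2 : 2 ≤ n := by rcases hn with rfl | rfl <;> norm_num
  have hμ0 : μ ≠ 0 := root_ne_zero hn2 hirr hμ
  by_cases him : μ.im = 0
  · -- the eigenvalue μ is real
    have hμre : μ = ((μ.re : ℝ) : ℂ) := by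
      apply Complex.ext <;> simp [him]
    have habsμ : ‖μ‖ = |μ.re| := by
      conv_lhs => rw [hμre]
      rw [Complex.norm_real, Real.norm_eq_abs]
    have hq' : (q : ℝ) = |μ.re| ^ m := by rw [hq, habsμ]
    have hqnn : 0 ≤ (q : ℝ) := by rw [hq']; positivity
    have habspow : |μ.re ^ m| = (q : ℝ) := by rw [abs_pow, hq']
    have hex : ∃ c : ℚ, μ ^ m = (c : ℂ) := by
      rcases (abs_eq hqnn).mp habspow with h | h
      · refine ⟨q, ?_⟩
        rw [hμre, ← Complex.ofReal_pow, h]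
        push_cast
        ring
      · refine ⟨-q, ?_⟩
        rw [hμre, ← Complex.ofReal_pow, h]
        push_cast
        ring
    obtain ⟨c, hc⟩ := hex
    have hall := allRootsSameAbs hm0 hirr hμ hc
    have htre0 : μ.re ≠ 0 := fun h => hμ0 (by rw [hμre, h]; simp)
    rcases hn with rfl | rfl
    · -- n = 2 : T ^ 2 is a scalar matrix by Cayley–Hamilton
      obtain ⟨ht0, hpR⟩ := n2_real_sq hirr (by rwa [← hμre])
        (fun β hβ => by rw [hall β hβ, habsμ])
      have hM2 : intMat T ^ 2 = (μ.re ^ 2) • (1 : Matrix (Fin 2) (Fin 2) ℝ) := ch_sq hpR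
      refine hsim 2 (by norm_num) (by norm_num) ⟨1, isUnit_one, ?_⟩
      have hone : (1 : Matrix (Fin 2) (Fin 2) ℝ)⁻¹ = 1 := Matrix.inv_eq_left_inv (by simp)
      rw [hone, Matrix.one_mul, Matrix.mul_one, intMat_pow, hM2]
      exact ⟨μ.re ^ 2, by positivity, 1, by simp, by simp⟩
    · -- n = 3 : use a non-real root to build a similarity conjugation for T itself
      obtain ⟨σ, hσroot, hσim⟩ := exists_nonreal_root hirr (abs_pos.mpr htre0)
        (fun β hβ => by rw [hall β hβ, habsμ])
      obtain ⟨v, hv0, hv⟩ := exists_eigenvector ((intMat T).map fun r : ℝ => (r : ℂ)) σ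
        (by rw [show (intMat T).map (fun r : ℝ => (r : ℂ)) = T.map fun x => (x : ℂ) from
          intMat_mapC T, charpolyC_eq]; exact hσroot)
      have hroot : (intMat T).charpoly.IsRoot μ.re := by
        rw [charpolyR_eq]
        exact real_root_transfer (by rwa [← hμre])
      obtain ⟨u, hu0, hu⟩ := exists_eigenvector (intMat T) μ.re hroot
      have habst : |μ.re| = ‖σ‖ := by
        rw [hall σ hσroot, habsμ]
      obtain ⟨Q, hQu, hQsim⟩ := sim3 (intMat T) hσim habst hu0 hu hv0 hv
      exact hsim 1 le_rfl (by norm_num) ⟨Q, hQu, by rwa [pow_one]⟩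
  · -- μ is not real
    rcases hn with rfl | rfl
    · -- n = 2 : T itself is conjugate to a similarity matrix
      obtain ⟨v, hv0, hv⟩ := exists_eigenvector ((intMat T).map fun r : ℝ => (r : ℂ)) μ
        (by rw [show (intMat T).map (fun r : ℝ => (r : ℂ)) = T.map fun x => (x : ℂ) from
          intMat_mapC T, charpolyC_eq]; exact hμ)
      obtain ⟨Q, hQu, hQsim⟩ := sim2 (intMat T) him hv0 hv
      exact hsim 1 le_rfl (by norm_num) ⟨Q, hQu, by rwa [pow_one]⟩
    · -- n = 3
      obtain ⟨ν, hνroot, hνim, hνprod⟩ := third_root hirr hμ him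
      have hνre : ν = ((ν.re : ℝ) : ℂ) := by
        apply Complex.ext <;> simp [hνim]
      have hdet : ((T.det : ℂ)) = μ * (starRingEnd ℂ) μ * ν := by
        rw [← hνprod, ← charpolyC_eq, ← Matrix.det_eq_prod_roots_charpoly]
        exact RingHom.map_det (Int.castRingHom ℂ) T
      have hμcon : μ * (starRingEnd ℂ) μ = ((‖μ‖ ^ 2 : ℝ) : ℂ) := by
        rw [Complex.mul_conj]
        norm_cast
        rw [Complex.sq_norm]
      have hdetR : (T.det : ℝ) = ‖μ‖ ^ 2 * ν.re := by
        have hcast : ((T.det : ℝ) : ℂ) = (((‖μ‖ ^ 2 * ν.re : ℝ)) : ℂ) := by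
          calc ((T.det : ℝ) : ℂ) = (T.det : ℂ) := by rw [Complex.ofReal_intCast]
            _ = μ * (starRingEnd ℂ) μ * ν := hdet
            _ = ((‖μ‖ ^ 2 : ℝ) : ℂ) * ((ν.re : ℝ) : ℂ) := by
                rw [hμcon, ← hνre]
            _ = (((‖μ‖ ^ 2 * ν.re : ℝ)) : ℂ) := by push_cast; ring
        exact_mod_cast hcast
      have habspos : 0 < ‖μ‖ := norm_pos_iff.mpr hμ0
      have hq0 : (q : ℝ) ≠ 0 := by
        rw [hq]
        positivity
      have hqQ0 : q ≠ 0 := fun h => hq0 (by rw [h]; norm_num)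
      have hpow : (T.det : ℝ) ^ m = (q : ℝ) ^ 2 * ν.re ^ m := by
        rw [hdetR, mul_pow, show (‖μ‖ ^ 2) ^ m = ((q : ℝ)) ^ 2 by rw [hq]; ring]
      have hre : ν.re ^ m = (((T.det ^ m : ℚ) / q ^ 2 : ℚ) : ℝ) := by
        rw [Rat.cast_div, Rat.cast_pow, Rat.cast_pow, Rat.cast_intCast]
        field_simp
        linarith [hpow]
      have hνc : ν ^ m = (((T.det ^ m : ℚ) / q ^ 2 : ℚ) : ℂ) := by
        conv_lhs => rw [hνre]
        rw [← Complex.ofReal_pow, hre]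
        norm_cast
      have hall := allRootsSameAbs hm0 hirr hνroot hνc
      have habsν : ‖ν‖ = |ν.re| := by
        conv_lhs => rw [hνre]
        rw [Complex.norm_real, Real.norm_eq_abs]
      obtain ⟨v, hv0, hv⟩ := exists_eigenvector ((intMat T).map fun r : ℝ => (r : ℂ)) μ
        (by rw [show (intMat T).map (fun r : ℝ => (r : ℂ)) = T.map fun x => (x : ℂ) from
          intMat_mapC T, charpolyC_eq]; exact hμ)
      have hroot : (intMat T).charpoly.IsRoot ν.re := by
        rw [charpolyR_eq]
        exact real_root_transfer (by rwa [← hνre])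
      obtain ⟨u, hu0, hu⟩ := exists_eigenvector (intMat T) ν.re hroot
      have habst : |ν.re| = ‖μ‖ := by
        rw [← habsν, ← hall μ hμ]
      obtain ⟨Q, hQu, hQsim⟩ := sim3 (intMat T) him habst hu0 hu hv0 hv
      exact hsim 1 le_rfl (by norm_num) ⟨Q, hQu, by rwa [pow_one]⟩

end FracPert
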